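/- Let F be a field and n a natural number. Let A and B be F-linear subspaces of the space of n×n matrices over F, all of whose elements are diagonal matrices. If there exists an invertible n×n matrix g over F such that {g M g⁻¹ : M ∈ A} = B, then there exists a permutation σ of {1,…,n} such that the permutation matrix P_σ satisfies {P_σ M P_σ⁻¹ : M ∈ A} = B. -/

import Mathlib

open Matrix

/-- If `D` and `uDu⁻¹` are diagonal and `u i j ≠ 0`, then `(uDu⁻¹) i i = D j j`. -/
lemma aux_key {F : Type*} [Field F] {n : ℕ} (u : (Matrix (Fin n) (Fin n) F)ˣ)
    (D : Matrix (Fin n) (Fin n) F) (hD : D.IsDiag)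
    (hC : ((u : Matrix (Fin n) (Fin n) F) * D *
      ((u⁻¹ : (Matrix (Fin n) (Fin n) F)ˣ) : Matrix (Fin n) (Fin n) F)).IsDiag)
    {i j : Fin n} (hij : (u : Matrix (Fin n) (Fin n) F) i j ≠ 0) :
    ((u : Matrix (Fin n) (Fin n) F) * D *
      ((u⁻¹ : (Matrix (Fin n) (Fin n) F)ˣ) : Matrix (Fin n) (Fin n) F)) i i = D j j := by
  set C := (u : Matrix (Fin n) (Fin n) F) * D *
      ((u⁻¹ : (Matrix (Fin n) (Fin n) F)ˣ) : Matrix (Fin n) (Fin n) F) with hCdef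
  have h1 : C * (u : Matrix (Fin n) (Fin n) F) = (u : Matrix (Fin n) (Fin n) F) * D := by
    rw [hCdef, mul_assoc, mul_assoc]
    norm_cast
    rw [inv_mul_cancel u]
    simp
  have h2 := congrFun (congrFun h1 i) j
  rw [Matrix.mul_apply, Matrix.mul_apply] at h2
  rw [Finset.sum_eq_single i (fun k _ hk => by rw [hC hk.symm, zero_mul])
    (by simp)] at h2
  rw [Finset.sum_eq_single j (fun k _ hk => by rw [hD hk, mul_zero])
    (by simp)] at h2
  exact mul_right_cancel₀ hij (h2.trans (mul_comm _ _))

lemma aux_card {F : Type*} [Field F] {m p : Type*} [Fintype m] [Fintype p]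
    [DecidableEq m] [DecidableEq p]
    (M : Matrix m p F) (N : Matrix p m F) (h1 : M * N = 1) (h2 : N * M = 1) :
    Fintype.card m = Fintype.card p := by
  let e : (p → F) ≃ₗ[F] (m → F) :=
    LinearEquiv.ofLinear (Matrix.toLin' M) (Matrix.toLin' N)
      (by rw [← Matrix.toLin'_mul, h1, Matrix.toLin'_one])
      (by rw [← Matrix.toLin'_mul, h2, Matrix.toLin'_one])
  have := e.finrank_eq
  rw [Module.finrank_fintype_fun_eq_card, Module.finrank_fintype_fun_eq_card] at this
  exact this.symm


/-- If two linear subspaces of diagonal `n × n` matrices over a field `F`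
are conjugate by some invertible matrix `g`, then they are conjugate by a permutation
matrix `P_σ`, where `(P_σ)_{ij} = 1` iff `i = σ j`. -/
theorem stmt_0 (F : Type*) [Field F] (n : ℕ)
    (A B : Submodule F (Matrix (Fin n) (Fin n) F))
    (hA : ∀ M ∈ A, M.IsDiag) (hB : ∀ M ∈ B, M.IsDiag)
    (hconj : ∃ g : (Matrix (Fin n) (Fin n) F)ˣ,
      (fun M => (g : Matrix (Fin n) (Fin n) F) * M *
          ((g⁻¹ : (Matrix (Fin n) (Fin n) F)ˣ) : Matrix (Fin n) (Fin n) F)) ''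
        (A : Set (Matrix (Fin n) (Fin n) F)) = (B : Set (Matrix (Fin n) (Fin n) F))) :
    ∃ σ : Equiv.Perm (Fin n),
      (fun M => (Matrix.of fun i j => if i = σ j then (1 : F) else 0) * M *
          (Matrix.of fun i j => if i = σ j then (1 : F) else 0)⁻¹) ''
        (A : Set (Matrix (Fin n) (Fin n) F)) = (B : Set (Matrix (Fin n) (Fin n) F)) := by
  classical
  obtain ⟨g, hconj⟩ := hconj
  have hmemB : ∀ D ∈ A, (g : Matrix (Fin n) (Fin n) F) * D *
      ((g⁻¹ : (Matrix (Fin n) (Fin n) F)ˣ) : Matrix (Fin n) (Fin n) F) ∈ B := by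
    intro D hD
    rw [← SetLike.mem_coe, ← hconj]
    exact Set.mem_image_of_mem _ hD
  -- the diagonal-entry functionals on A
  set ε : Fin n → (A → F) := fun j D => (D : Matrix (Fin n) (Fin n) F) j j with hεdef
  set β : Fin n → (A → F) := fun i D => ((g : Matrix (Fin n) (Fin n) F) * (D : Matrix (Fin n) (Fin n) F) *
      ((g⁻¹ : (Matrix (Fin n) (Fin n) F)ˣ) : Matrix (Fin n) (Fin n) F)) i i with hβdef
  have hkey1 : ∀ {i j : Fin n}, (g : Matrix (Fin n) (Fin n) F) i j ≠ 0 → β i = ε j := by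
    intro i j hij
    funext D
    exact aux_key g D (hA D D.2) (hB _ (hmemB D D.2)) hij
  have hback : ∀ D : Matrix (Fin n) (Fin n) F,
      ((g⁻¹ : (Matrix (Fin n) (Fin n) F)ˣ) : Matrix (Fin n) (Fin n) F) *
        ((g : Matrix (Fin n) (Fin n) F) * D *
          ((g⁻¹ : (Matrix (Fin n) (Fin n) F)ˣ) : Matrix (Fin n) (Fin n) F)) *
        ((g⁻¹⁻¹ : (Matrix (Fin n) (Fin n) F)ˣ) : Matrix (Fin n) (Fin n) F) = D := by
    intro D
    rw [inv_inv]
    have hgi : ((g⁻¹ : (Matrix (Fin n) (Fin n) F)ˣ) : Matrix (Fin n) (Fin n) F) *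
        (g : Matrix (Fin n) (Fin n) F) = 1 := g.inv_mul
    calc ((g⁻¹ : (Matrix (Fin n) (Fin n) F)ˣ) : Matrix (Fin n) (Fin n) F) *
          ((g : Matrix (Fin n) (Fin n) F) * D *
            ((g⁻¹ : (Matrix (Fin n) (Fin n) F)ˣ) : Matrix (Fin n) (Fin n) F)) *
          (g : Matrix (Fin n) (Fin n) F)
        = (((g⁻¹ : (Matrix (Fin n) (Fin n) F)ˣ) : Matrix (Fin n) (Fin n) F) *
            (g : Matrix (Fin n) (Fin n) F)) * D *
          (((g⁻¹ : (Matrix (Fin n) (Fin n) F)ˣ) : Matrix (Fin n) (Fin n) F) *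
            (g : Matrix (Fin n) (Fin n) F)) := by simp only [mul_assoc]
      _ = D := by rw [hgi, one_mul, mul_one]
  have hkey2 : ∀ {i j : Fin n},
      ((g⁻¹ : (Matrix (Fin n) (Fin n) F)ˣ) : Matrix (Fin n) (Fin n) F) j i ≠ 0 → ε j = β i := by
    intro i j hij
    funext D
    have hCdiag : (((g⁻¹ : (Matrix (Fin n) (Fin n) F)ˣ) : Matrix (Fin n) (Fin n) F) *
        ((g : Matrix (Fin n) (Fin n) F) * (D : Matrix (Fin n) (Fin n) F) *
          ((g⁻¹ : (Matrix (Fin n) (Fin n) F)ˣ) : Matrix (Fin n) (Fin n) F)) *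
        ((g⁻¹⁻¹ : (Matrix (Fin n) (Fin n) F)ˣ) : Matrix (Fin n) (Fin n) F)).IsDiag := by
      rw [hback]
      exact hA D D.2
    have h := aux_key g⁻¹ _ (hB _ (hmemB D D.2)) hCdiag hij
    rw [hback] at h
    exact h
  -- equal fiber cardinalities
  have hcard : ∀ v : (A → F),
      Fintype.card {j : Fin n // ε j = v} = Fintype.card {i : Fin n // β i = v} := by
    intro v
    have hMN : (Matrix.of fun (j : {j : Fin n // ε j = v}) (i : {i : Fin n // β i = v}) =>
          ((g⁻¹ : (Matrix (Fin n) (Fin n) F)ˣ) : Matrix (Fin n) (Fin n) F) j.1 i.1) *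
        (Matrix.of fun (i : {i : Fin n // β i = v}) (j : {j : Fin n // ε j = v}) =>
          (g : Matrix (Fin n) (Fin n) F) i.1 j.1) = 1 := by
      ext ⟨j, hj⟩ ⟨j', hj'⟩
      rw [Matrix.mul_apply]
      have hfull : ∑ i : Fin n, ((g⁻¹ : (Matrix (Fin n) (Fin n) F)ˣ) : Matrix (Fin n) (Fin n) F) j i *
          (g : Matrix (Fin n) (Fin n) F) i j' = if j = j' then 1 else 0 := by
        have := congrFun (congrFun g.inv_mul j) j'
        rw [Matrix.mul_apply] at this
        rw [this, Matrix.one_apply]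
      have hsub : ∑ i : {i : Fin n // β i = v},
          ((g⁻¹ : (Matrix (Fin n) (Fin n) F)ˣ) : Matrix (Fin n) (Fin n) F) j i.1 *
          (g : Matrix (Fin n) (Fin n) F) i.1 j' =
          ∑ i : Fin n, ((g⁻¹ : (Matrix (Fin n) (Fin n) F)ˣ) : Matrix (Fin n) (Fin n) F) j i *
          (g : Matrix (Fin n) (Fin n) F) i j' := by
        rw [← Finset.sum_subtype (Finset.univ.filter (fun i => β i = v)) (by simp)
          (fun i => ((g⁻¹ : (Matrix (Fin n) (Fin n) F)ˣ) : Matrix (Fin n) (Fin n) F) j i *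
            (g : Matrix (Fin n) (Fin n) F) i j')]
        apply Finset.sum_filter_of_ne
        intro i _ hne
        have hgi : ((g⁻¹ : (Matrix (Fin n) (Fin n) F)ˣ) : Matrix (Fin n) (Fin n) F) j i ≠ 0 :=
          left_ne_zero_of_mul hne
        rw [← hkey2 hgi]; exact hj
      rw [Matrix.one_apply]
      simp only [Matrix.of_apply]
      rw [hsub, hfull]
      simp [Subtype.ext_iff]
    have hNM : (Matrix.of fun (i : {i : Fin n // β i = v}) (j : {j : Fin n // ε j = v}) =>
          (g : Matrix (Fin n) (Fin n) F) i.1 j.1) *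
        (Matrix.of fun (j : {j : Fin n // ε j = v}) (i : {i : Fin n // β i = v}) =>
          ((g⁻¹ : (Matrix (Fin n) (Fin n) F)ˣ) : Matrix (Fin n) (Fin n) F) j.1 i.1) = 1 := by
      ext ⟨i, hi⟩ ⟨i', hi'⟩
      rw [Matrix.mul_apply]
      have hfull : ∑ j : Fin n, (g : Matrix (Fin n) (Fin n) F) i j *
          ((g⁻¹ : (Matrix (Fin n) (Fin n) F)ˣ) : Matrix (Fin n) (Fin n) F) j i' = if i = i' then 1 else 0 := by
        have := congrFun (congrFun g.mul_inv i) i'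
        rw [Matrix.mul_apply] at this
        rw [this, Matrix.one_apply]
      have hsub : ∑ j : {j : Fin n // ε j = v},
          (g : Matrix (Fin n) (Fin n) F) i j.1 *
          ((g⁻¹ : (Matrix (Fin n) (Fin n) F)ˣ) : Matrix (Fin n) (Fin n) F) j.1 i' =
          ∑ j : Fin n, (g : Matrix (Fin n) (Fin n) F) i j *
          ((g⁻¹ : (Matrix (Fin n) (Fin n) F)ˣ) : Matrix (Fin n) (Fin n) F) j i' := by
        rw [← Finset.sum_subtype (Finset.univ.filter (fun j => ε j = v)) (by simp)
          (fun j => (g : Matrix (Fin n) (Fin n) F) i j *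
            ((g⁻¹ : (Matrix (Fin n) (Fin n) F)ˣ) : Matrix (Fin n) (Fin n) F) j i')]
        apply Finset.sum_filter_of_ne
        intro j _ hne
        have hgi : (g : Matrix (Fin n) (Fin n) F) i j ≠ 0 := left_ne_zero_of_mul hne
        rw [← hkey1 hgi]; exact hi
      rw [Matrix.one_apply]
      simp only [Matrix.of_apply]
      rw [hsub, hfull]
      simp [Subtype.ext_iff]
    exact aux_card _ _ hMN hNM
  -- the permutation
  set σ : Equiv.Perm (Fin n) :=
    Equiv.ofFiberEquiv (f := ε) (g := β) (fun v => Fintype.equivOfCardEq (hcard v)) with hσdef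
  have hσ : ∀ j : Fin n, β (σ j) = ε j := fun j => Equiv.ofFiberEquiv_map _ j
  refine ⟨σ, ?_⟩
  set P : Matrix (Fin n) (Fin n) F := Matrix.of fun i j => if i = σ j then (1 : F) else 0 with hPdef
  set Q : Matrix (Fin n) (Fin n) F := Matrix.of fun i j => if i = σ⁻¹ j then (1 : F) else 0 with hQdef
  have hPQ : P * Q = 1 := by
    ext i k
    rw [Matrix.mul_apply]
    rw [Finset.sum_eq_single (σ⁻¹ k) (fun b _ hb => by
      simp [hPdef, hQdef, hb]; intro h; exact absurd h hb) (by simp)]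
    simp [hPdef, hQdef, Matrix.one_apply]
  have hPinv : P⁻¹ = Q := Matrix.inv_eq_right_inv hPQ
  have hPD : ∀ D ∈ A, P * D * P⁻¹ =
      (g : Matrix (Fin n) (Fin n) F) * D *
        ((g⁻¹ : (Matrix (Fin n) (Fin n) F)ˣ) : Matrix (Fin n) (Fin n) F) := by
    intro D hD
    rw [hPinv]
    have hl : ∀ i k : Fin n, (P * D * Q) i k = D (σ⁻¹ i) (σ⁻¹ k) := by
      intro i k
      rw [Matrix.mul_apply]
      rw [Finset.sum_eq_single (σ⁻¹ k) (fun b _ hb => by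
        simp [hQdef, hb]; intro h; exact absurd h hb) (by simp)]
      rw [Matrix.mul_apply]
      rw [Finset.sum_eq_single (σ⁻¹ i) (fun b _ hb => by
        have : i ≠ σ b := by
          intro h
          exact hb (by simp [h])
        simp [hPdef, this]) (by simp)]
      simp [hPdef, hQdef]
    ext i k
    rw [hl i k]
    by_cases hik : i = k
    · subst hik
      have h1 : ((g : Matrix (Fin n) (Fin n) F) * D *
          ((g⁻¹ : (Matrix (Fin n) (Fin n) F)ˣ) : Matrix (Fin n) (Fin n) F)) i i =
          β i ⟨D, hD⟩ := rfl
      have h2 : β i ⟨D, hD⟩ = ε (σ⁻¹ i) ⟨D, hD⟩ := by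
        have := hσ (σ⁻¹ i)
        rw [Equiv.Perm.inv_def, Equiv.apply_symm_apply] at this
        rw [this]
        rfl
      rw [h1, h2]
    · rw [hA D hD (fun h => hik (by simpa using congrArg σ h)),
        hB _ (hmemB D hD) hik]
  rw [← hconj]
  apply Set.image_congr
  intro M hM
  exact hPD M hM
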